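/- There exist constants C, c > 0 depending only on α such that for all j ≥ 1 and all real t ≤ b_j, one has log(φ_{j+1}(t)/φ_j(t)) ≤ −c 2^j j^{−β} + C. -/

import Mathlib

open MeasureTheory ProbabilityTheory Filter
open scoped Classical

noncomputable section

/-- `mseq α j = 2⌊j^(1/α)⌋`, the sequence `m_j` from the construction. -/
def mseq (α : ℝ) (j : ℕ) : ℕ := 2 * ⌊(j : ℝ) ^ (1 / α)⌋₊

/-- The index `j` of the block `I_j = (m_(j-1), m_j]` containing `k`
(with the convention `m_(-1) = -1`). -/
def blockIdx (α : ℝ) (k : ℕ) : ℕ := sInf {j : ℕ | k ≤ mseq α j}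

/-- The deterministic coefficient sequence: `c_k = exp (-2^j)` for `k ∈ I_j`. -/
def cseq (α : ℝ) (k : ℕ) : ℝ := Real.exp (-(2 : ℝ) ^ blockIdx α k)

/-- `j_* = max {j : I_j ∩ {0,…,n} ≠ ∅}`, the index of the block containing `n`. -/
def jStar (α : ℝ) (n : ℕ) : ℕ := blockIdx α n

/-- `β = min {1/2, (1-α)/(2α)}`. -/
def betaC (α : ℝ) : ℝ := min (1 / 2) ((1 - α) / (2 * α))

/-- `a_j = α j^(1-1/α) 2^(j-2) (1 + j^(-β))`. -/
def aseq (α : ℝ) (j : ℕ) : ℝ :=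
  α * (j : ℝ) ^ (1 - 1 / α) * (2 : ℝ) ^ ((j : ℤ) - 2) * (1 + (j : ℝ) ^ (-betaC α))

/-- `b_j = α j^(1-1/α) 2^(j-1) (1 - j^(-β))`. -/
def bseq (α : ℝ) (j : ℕ) : ℝ :=
  α * (j : ℝ) ^ (1 - 1 / α) * (2 : ℝ) ^ ((j : ℤ) - 1) * (1 - (j : ℝ) ^ (-betaC α))

/-- `φ_j(t) = c_(m_j) e^(t m_j)` with `c_(m_j) = exp (-2^j)`. -/
def phi (α : ℝ) (j : ℕ) (t : ℝ) : ℝ := Real.exp (-(2 : ℝ) ^ j) * Real.exp (t * mseq α j)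

/-- `g_n(t) = f_n(e^t) = ∑_{k=0}^n c_k ε_k e^{tk}`. -/
def gval (α : ℝ) {Ω : Type*} (ε : ℕ → Ω → ℝ) (n : ℕ) (ω : Ω) (t : ℝ) : ℝ :=
  ∑ k ∈ Finset.range (n + 1), cseq α k * ε k ω * Real.exp (t * k)

/-- `R_n`: the number of real roots of `f_n(z) = ∑_{k=0}^n c_k ε_k z^k`
(counted without multiplicity). -/
def Rroots (α : ℝ) {Ω : Type*} (ε : ℕ → Ω → ℝ) (n : ℕ) (ω : Ω) : ℕ :=
  Set.ncard {t : ℝ | ∑ k ∈ Finset.range (n + 1), cseq α k * ε k ω * t ^ k = 0}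

/-- `S_n`: the number of sign changes among `(ε_(m_0), …, ε_(m_(j_*-1)), ε_n)`. -/
def Schanges (α : ℝ) {Ω : Type*} (ε : ℕ → Ω → ℝ) (n : ℕ) (ω : Ω) : ℕ :=
  ((Finset.range (jStar α n)).filter fun j =>
    ε (mseq α j) ω * (if j + 1 < jStar α n then ε (mseq α (j + 1)) ω else ε n ω) < 0).card

/-- There are constants `C, c > 0` depending only on `α` so that for all `j ≥ 1` and all
`t ≤ b_j`, one has `log (φ_(j+1)(t) / φ_j(t)) ≤ -c 2^j j^(-β) + C`. -/
lemma aux_exp_le (y : ℝ) : Real.exp y ≤ 1 + y * Real.exp y := by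
  have h := Real.add_one_le_exp (-y)
  have hp := Real.exp_pos y
  have h2 : (-y + 1) * Real.exp y ≤ Real.exp (-y) * Real.exp y :=
    mul_le_mul_of_nonneg_right h hp.le
  rw [← Real.exp_add, neg_add_cancel, Real.exp_zero] at h2
  nlinarith

lemma aux_rpow_le (q x : ℝ) (hq : 0 ≤ q) (hx0 : 0 ≤ x) (hx1 : x ≤ 1) :
    (1+x) ^ q ≤ 1 + q * Real.exp q * x := by
  have hb : (0:ℝ) < 1 + x := by linarith
  have h1 : (1+x) ^ q ≤ Real.exp (q * x) := by
    rw [Real.rpow_def_of_pos hb]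
    apply Real.exp_le_exp.2
    have hlog : Real.log (1+x) ≤ x := by
      have := Real.log_le_sub_one_of_pos hb
      linarith
    nlinarith
  have h2 : Real.exp (q*x) ≤ 1 + (q*x) * Real.exp (q*x) := aux_exp_le _
  have h3 : Real.exp (q*x) ≤ Real.exp q := Real.exp_le_exp.2 (by nlinarith)
  nlinarith [mul_le_mul_of_nonneg_left h3 (mul_nonneg hq hx0)]

lemma aux_convex (p x : ℝ) (hp : 1 ≤ p) (hx : 0 ≤ x) :
    (1+x) ^ p ≤ 1 + p * x * (1+x) ^ (p-1) := by
  have hb : (0:ℝ) < 1 + x := by linarith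
  have hz : -1 ≤ -x / (1+x) := by
    rw [neg_div, neg_le_neg_iff, div_le_one hb]; linarith
  have h := one_add_mul_self_le_rpow_one_add hz hp
  have hbase : 1 + -x/(1+x) = 1/(1+x) := by field_simp; ring
  rw [hbase, one_div, Real.inv_rpow hb.le] at h
  have hP := Real.rpow_pos_of_pos hb p
  have h' : (1 + p * (-x/(1+x))) * (1+x)^p ≤ 1 := by
    have h2 := mul_le_mul_of_nonneg_right h hP.le
    rwa [inv_mul_cancel₀ hP.ne'] at h2
  rw [Real.rpow_sub hb, Real.rpow_one]
  have hexp : (1 + p * (-x/(1+x))) * (1+x)^p = (1+x)^p - p*x*((1+x)^p/(1+x)) := by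
    field_simp; ring
  rw [hexp] at h'
  linarith

lemma aux_key (e w : ℝ) (he0 : 0 < e) (he1 : e ≤ 1) (hw0 : 0 ≤ w)
    (hw : w ≤ 1 + e/4) : (1 - e) * w + e/4 ≤ 1 := by
  rcases le_or_gt w (1/2) with h | h
  · nlinarith
  · nlinarith

theorem statement7 (α : ℝ) (hα : α ∈ Set.Ioo (0 : ℝ) 1) :
    ∃ C > (0 : ℝ), ∃ c > (0 : ℝ), ∀ j : ℕ, 1 ≤ j → ∀ t : ℝ, t ≤ bseq α j →
      Real.log (phi α (j + 1) t / phi α j t) ≤ -c * 2 ^ j * (j : ℝ) ^ (-betaC α) + C := by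
  obtain ⟨hα0, hα1⟩ := hα
  set p : ℝ := 1 / α with hpdef
  have hp1 : 1 < p := one_lt_one_div hα0 hα1
  have hβ2 : betaC α ≤ 1 / 2 := min_le_left _ _
  have hβp : betaC α ≤ (p - 1) / 2 := by
    have h : (1 - α) / (2 * α) = (p - 1) / 2 := by
      rw [hpdef]; field_simp
    exact (min_le_right _ _).trans_eq h
  have hβpos : 0 < betaC α :=
    lt_min (by norm_num) (div_pos (by linarith) (by linarith))
  set A : ℝ := (p - 1) * Real.exp (p - 1) with hAdef
  have hA0 : 0 ≤ A := mul_nonneg (by linarith) (Real.exp_pos _).le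
  have htend : Tendsto (fun j : ℕ => A * (j : ℝ) ^ (-(1/2) : ℝ) + α * (j : ℝ) ^ (-((p-1)/2)))
      atTop (nhds 0) := by
    have hc : Tendsto (fun n : ℕ => (n : ℝ)) atTop atTop := tendsto_natCast_atTop_atTop
    have h1 := (tendsto_rpow_neg_atTop (by norm_num : (0:ℝ) < 1/2)).comp hc
    have h2 := (tendsto_rpow_neg_atTop (by linarith : (0:ℝ) < (p-1)/2)).comp hc
    have h3 := (h1.const_mul A).add (h2.const_mul α)
    simpa [Function.comp] using h3
  obtain ⟨J, hJ⟩ := eventually_atTop.1 (htend.eventually_lt_const (by norm_num : (0:ℝ) < 1/4))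
  set F : ℕ → ℝ := fun i => -(2:ℝ) ^ i + bseq α i * ((mseq α (i+1) : ℝ) - (mseq α i : ℝ))
      + 1/4 * 2 ^ i * (i:ℝ) ^ (-betaC α) with hFdef
  have hsum : 0 ≤ ∑ i ∈ Finset.range J, max 0 (F i) :=
    Finset.sum_nonneg fun i _ => le_max_left _ _
  refine ⟨1 + ∑ i ∈ Finset.range J, max 0 (F i), by linarith, 1/4, by norm_num, ?_⟩
  intro j hj t ht
  have hj1 : (1:ℝ) ≤ (j:ℝ) := by exact_mod_cast hj
  have hjpos : (0:ℝ) < (j:ℝ) := by linarith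
  set e : ℝ := (j:ℝ) ^ (-betaC α) with hedef
  have he0 : 0 < e := Real.rpow_pos_of_pos hjpos _
  have he1 : e ≤ 1 := Real.rpow_le_one_of_one_le_of_nonpos hj1 (by linarith)
  set M0 : ℝ := (⌊(j:ℝ) ^ p⌋₊ : ℝ) with hM0def
  set M1 : ℝ := (⌊((j:ℝ)+1) ^ p⌋₊ : ℝ) with hM1def
  have hmono : (j:ℝ)^p ≤ ((j:ℝ)+1)^p :=
    Real.rpow_le_rpow hjpos.le (by linarith) (by linarith)
  have hd0 : M0 ≤ M1 := by
    rw [hM0def, hM1def]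
    exact_mod_cast Nat.floor_le_floor hmono
  have hΔ : ((mseq α (j+1) : ℝ) - (mseq α j : ℝ)) = 2 * (M1 - M0) := by
    simp only [mseq, ← hpdef]
    push_cast
    rw [← hM1def, ← hM0def]
    ring
  set w : ℝ := α * (j:ℝ)^(1-p) * (M1 - M0) with hwdef
  have hw0 : 0 ≤ w := by
    rw [hwdef]
    apply mul_nonneg (mul_nonneg hα0.le (Real.rpow_pos_of_pos hjpos _).le)
    linarith
  set x : ℝ := 1 / (j:ℝ) with hxdef
  have hx0 : 0 ≤ x := by rw [hxdef]; positivity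
  have hx1 : x ≤ 1 := by rw [hxdef, div_le_one hjpos]; exact hj1
  have hjp : (j:ℝ)^(1-p) * (j:ℝ)^p = (j:ℝ) := by
    rw [← Real.rpow_add hjpos, sub_add_cancel, Real.rpow_one]
  have hsplit : ((j:ℝ)+1)^p = (j:ℝ)^p * (1+x)^p := by
    have h : (j:ℝ)+1 = (j:ℝ) * (1+x) := by
      rw [hxdef]; field_simp
    rw [h, Real.mul_rpow hjpos.le (by positivity)]
  have hfloor_le : M1 ≤ ((j:ℝ)+1)^p := by
    rw [hM1def]; exact Nat.floor_le (by positivity)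
  have hfloor_gt : (j:ℝ)^p - 1 < M0 := by
    have h := Nat.lt_floor_add_one ((j:ℝ)^p)
    rw [hM0def]; linarith
  have hw_le1 : w ≤ (1+x)^(p-1) + α * (j:ℝ)^(1-p) := by
    have hB : w ≤ α * (j:ℝ)^(1-p) * (((j:ℝ)+1)^p - (j:ℝ)^p + 1) := by
      rw [hwdef]
      apply mul_le_mul_of_nonneg_left _ (by positivity)
      linarith
    have hexp : α * (j:ℝ)^(1-p) * (((j:ℝ)+1)^p - (j:ℝ)^p + 1)
        = α * (j:ℝ) * ((1+x)^p - 1) + α * (j:ℝ)^(1-p) := by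
      rw [hsplit]
      linear_combination (α * ((1+x)^p - 1)) * hjp
    have hconv := aux_convex p x hp1.le hx0
    have hαp : α * p = 1 := by rw [hpdef]; field_simp
    have hjx : (j:ℝ) * x = 1 := by rw [hxdef]; field_simp
    have hmid : α * (j:ℝ) * ((1+x)^p - 1) ≤ (1+x)^(p-1) := by
      have h1 : α * (j:ℝ) * ((1+x)^p - 1) ≤ α * (j:ℝ) * (p * x * (1+x)^(p-1)) := by
        apply mul_le_mul_of_nonneg_left _ (by positivity)
        linarith
      have h2 : α * (j:ℝ) * (p * x * (1+x)^(p-1)) = (1+x)^(p-1) := by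
        linear_combination ((j:ℝ) * x * (1+x)^(p-1)) * hαp + ((1+x)^(p-1)) * hjx
      linarith
    rw [hexp] at hB
    linarith
  have haux := aux_rpow_le (p-1) x (by linarith) hx0 hx1
  have hw_le2 : w ≤ 1 + A * x + α * (j:ℝ)^(1-p) := by
    rw [hAdef]
    linarith
  have h2pow : (2:ℝ)^((j:ℤ)-1) = (2:ℝ)^j / 2 := by
    rw [zpow_sub₀ (by norm_num : (2:ℝ) ≠ 0), zpow_one, zpow_natCast]
  have hbseq : bseq α j * (2*(M1-M0)) = (2:ℝ)^j * ((1-e)*w) := by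
    simp only [bseq, ← hpdef, ← hedef, h2pow, hwdef]
    ring
  have hphi : ∀ i : ℕ, phi α i t = Real.exp (-(2:ℝ)^i + t * mseq α i) := fun i => by
    rw [phi, ← Real.exp_add]
  have hlog : Real.log (phi α (j + 1) t / phi α j t)
      = -(2:ℝ)^j + t * ((mseq α (j+1) : ℝ) - (mseq α j : ℝ)) := by
    rw [hphi, hphi, ← Real.exp_sub, Real.log_exp]
    ring
  have hΔ0 : (0:ℝ) ≤ (mseq α (j+1) : ℝ) - (mseq α j : ℝ) := by rw [hΔ]; linarith
  have hstep : t * ((mseq α (j+1) : ℝ) - (mseq α j : ℝ))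
      ≤ bseq α j * ((mseq α (j+1) : ℝ) - (mseq α j : ℝ)) :=
    mul_le_mul_of_nonneg_right ht hΔ0
  have hb2 : bseq α j * ((mseq α (j+1) : ℝ) - (mseq α j : ℝ)) = (2:ℝ)^j * ((1-e)*w) := by
    rw [hΔ]; exact hbseq
  rw [hlog]
  rcases lt_or_ge j J with hJj | hJj
  · have hFle : F j ≤ ∑ i ∈ Finset.range J, max 0 (F i) :=
      le_trans (le_max_right 0 (F j))
        (Finset.single_le_sum (fun i _ => le_max_left 0 (F i)) (Finset.mem_range.2 hJj))
    have hFj : F j = -(2:ℝ)^j + bseq α j * ((mseq α (j+1) : ℝ) - (mseq α j : ℝ))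
        + 1/4 * 2^j * e := by
      simp only [hFdef, hedef]
    rw [hFj] at hFle
    linarith
  · have hS := hJ j hJj
    have hr1 : A * x ≤ A * (e * (j:ℝ)^(-(1/2):ℝ)) := by
      apply mul_le_mul_of_nonneg_left _ hA0
      have h := Real.rpow_le_rpow_of_exponent_le hj1
        (show (-1:ℝ) ≤ -betaC α + -(1/2) by linarith)
      rw [Real.rpow_add hjpos] at h
      rw [hxdef, one_div, ← Real.rpow_neg_one (j:ℝ)]
      exact h.trans_eq (by rw [hedef])
    have hr2 : α * (j:ℝ)^(1-p) ≤ α * (e * (j:ℝ)^(-((p-1)/2))) := by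
      apply mul_le_mul_of_nonneg_left _ hα0.le
      have h := Real.rpow_le_rpow_of_exponent_le hj1
        (show 1-p ≤ -betaC α + -((p-1)/2) by linarith)
      rw [Real.rpow_add hjpos] at h
      exact h.trans_eq (by rw [hedef])
    have hw_le : w ≤ 1 + e/4 :=
      le_trans hw_le2 (by linarith [mul_le_mul_of_nonneg_left hS.le he0.le])
    have hkey := aux_key e w he0 he1 hw0 hw_le
    have h2j : (0:ℝ) < 2^j := by positivity
    have hmul : (2:ℝ)^j * ((1-e)*w + e/4) ≤ 2^j * 1 :=
      mul_le_mul_of_nonneg_left hkey h2j.le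
    linarith
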